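/- Let Ω = C([0,T],ℝ) and suppose ψ(t,ω) = ψ(t) does not depend on ω. Then the deterministic stopping time τ₀ ≡ 0 is not Pareto optimal with respect to 𝒜(0,ω) for any ω: the stopping time σ*(ω) = inf{s ∈ [0,T] : X*_s(ω) − X_s(ω) ≥ ψ(s)} satisfies R(0,ω;σ*,ω') < ψ(0) = R(0,ω;τ₀,ω') for all ω' ∈ Ω. -/

import Mathlib

open Set

noncomputable section

namespace SellingRegret

/-- Running maximum `X*_t(ω) = sup_{s ∈ [0,t]} X_s(ω)`, where `X_s(ω) = ω s`. -/
def Mstar (ω : ℝ → ℝ) (t : ℝ) : ℝ :=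
  sSup (ω '' Set.Icc 0 t)

/-- `𝒜(t,ω)`: the trajectories in `Ω` agreeing with `ω` on `[0,t]`. -/
def Hist (Ω : Set (ℝ → ℝ)) (t : ℝ) (ω : ℝ → ℝ) : Set (ℝ → ℝ) :=
  {ω' ∈ Ω | ∀ s ∈ Set.Icc 0 t, ω' s = ω s}

/-- A stopping time: a map `τ : Ω → [0,T]` such that whenever `τ(ω) ≤ t` and
`ω'` agrees with `ω` on `[0,t]`, one has `τ(ω') = τ(ω)`. -/
def IsStoppingTime (T : ℝ) (Ω : Set (ℝ → ℝ)) (τ : (ℝ → ℝ) → ℝ) : Prop :=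
  (∀ ω ∈ Ω, τ ω ∈ Set.Icc 0 T) ∧
  ∀ ω ∈ Ω, ∀ t ∈ Set.Icc 0 T, τ ω ≤ t →
    ∀ ω' ∈ Ω, (∀ s ∈ Set.Icc 0 t, ω' s = ω s) → τ ω' = τ ω

/-- Estimated regret `R(t,ω;τ,ω') = max{X*_{τ(ω')}(ω') − X_{τ(ω')}(ω'), ψ(τ(ω'),ω')}`
(it depends only on `τ` and `ω'`). -/
def regret (ψ : ℝ → (ℝ → ℝ) → ℝ) (τ : (ℝ → ℝ) → ℝ) (ω' : ℝ → ℝ) : ℝ :=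
  max (Mstar ω' (τ ω') - ω' (τ ω')) (ψ (τ ω') ω')

/-- Worst-case estimated regret `ℛ(t,ω;τ) = sup_{ω' ∈ 𝒜(t,ω)} R(t,ω;τ,ω')`,
valued in `[0,∞]`. -/
def worstRegret (Ω : Set (ℝ → ℝ)) (ψ : ℝ → (ℝ → ℝ) → ℝ)
    (t : ℝ) (ω : ℝ → ℝ) (τ : (ℝ → ℝ) → ℝ) : ENNReal :=
  ⨆ ω' ∈ Hist Ω t ω, ENNReal.ofReal (regret ψ τ ω')

/-- `σ*(ω) = inf {s ∈ [0,T] : X*_s(ω) − X_s(ω) ≥ ψ(s,ω)}`. -/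
def sigmaStar (T : ℝ) (ψ : ℝ → (ℝ → ℝ) → ℝ) (ω : ℝ → ℝ) : ℝ :=
  sInf {s ∈ Set.Icc 0 T | ψ s ω ≤ Mstar ω s - ω s}

/-- `τ ∈ 𝒯_t(ω)`: `τ(ω') ≥ t` for all `ω' ∈ 𝒜(t,ω)`. -/
def Admissible (Ω : Set (ℝ → ℝ)) (t : ℝ) (ω : ℝ → ℝ) (τ : (ℝ → ℝ) → ℝ) : Prop :=
  ∀ ω' ∈ Hist Ω t ω, t ≤ τ ω'

/-- `σ` is optimal with respect to `𝒜(t,ω)`. -/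
def OptimalAt (T : ℝ) (Ω : Set (ℝ → ℝ)) (ψ : ℝ → (ℝ → ℝ) → ℝ)
    (t : ℝ) (ω : ℝ → ℝ) (σ : (ℝ → ℝ) → ℝ) : Prop :=
  IsStoppingTime T Ω σ ∧ Admissible Ω t ω σ ∧
  ∀ τ, IsStoppingTime T Ω τ → Admissible Ω t ω τ →
    worstRegret Ω ψ t ω σ ≤ worstRegret Ω ψ t ω τ

/-- `σ` is Pareto optimal with respect to `𝒜(t,ω)`. -/
def ParetoOptimalAt (T : ℝ) (Ω : Set (ℝ → ℝ)) (ψ : ℝ → (ℝ → ℝ) → ℝ)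
    (t : ℝ) (ω : ℝ → ℝ) (σ : (ℝ → ℝ) → ℝ) : Prop :=
  IsStoppingTime T Ω σ ∧ Admissible Ω t ω σ ∧
  ¬ ∃ τ, IsStoppingTime T Ω τ ∧ Admissible Ω t ω τ ∧
      (∀ ω' ∈ Hist Ω t ω, regret ψ τ ω' ≤ regret ψ σ ω') ∧
      ∃ ω'' ∈ Hist Ω t ω, regret ψ τ ω'' < regret ψ σ ω''

/-- `σ` is perfect: optimal and Pareto optimal with respect to `𝒜(t,ω)`
whenever it is admissible for `𝒜(t,ω)`. -/
def Perfect (T : ℝ) (Ω : Set (ℝ → ℝ)) (ψ : ℝ → (ℝ → ℝ) → ℝ)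
    (σ : (ℝ → ℝ) → ℝ) : Prop :=
  IsStoppingTime T Ω σ ∧
  ∀ t ∈ Set.Icc 0 T, ∀ ω ∈ Ω, Admissible Ω t ω σ →
    OptimalAt T Ω ψ t ω σ ∧ ParetoOptimalAt T Ω ψ t ω σ

/-- Conditions (A) and (B) of Theorem 2 for a stopping time `σ`. -/
def CondAB (T : ℝ) (Ω : Set (ℝ → ℝ)) (ψ : ℝ → (ℝ → ℝ) → ℝ)
    (σ : (ℝ → ℝ) → ℝ) : Prop :=
  ∀ τ, IsStoppingTime T Ω τ → ∀ ω ∈ Ω,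
    (σ ω < τ ω → ∃ ω' ∈ Hist Ω (σ ω) ω, regret ψ σ ω' < regret ψ τ ω') ∧
    (τ ω < σ ω → ∀ ω' ∈ Hist Ω (τ ω) ω, regret ψ σ ω' < regret ψ τ ω')

/-- `Ω = C([0,T],ℝ)`: all trajectories continuous on `[0,T]`. -/
def OmegaC (T : ℝ) : Set (ℝ → ℝ) :=
  {ω | ContinuousOn ω (Set.Icc 0 T)}

/-- The two-sided Lipschitz corridor of Example 2:
`−L₁(t−s) ≤ ω(t) − ω(s) ≤ L₂(t−s)` for `0 ≤ s ≤ t ≤ T`. -/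
def OmegaL (T L₁ L₂ : ℝ) : Set (ℝ → ℝ) :=
  {ω | ∀ s t : ℝ, 0 ≤ s → s ≤ t → t ≤ T →
    -L₁ * (t - s) ≤ ω t - ω s ∧ ω t - ω s ≤ L₂ * (t - s)}


section Helpers

variable {T : ℝ}

lemma bddAbove_img {ω : ℝ → ℝ} {t : ℝ} (hω : ContinuousOn ω (Icc 0 T))
    (ht : t ≤ T) : BddAbove (ω '' Icc 0 t) :=
  isCompact_Icc.bddAbove_image (hω.mono (Icc_subset_Icc le_rfl ht))

lemma le_Mstar {ω : ℝ → ℝ} {t u : ℝ} (hω : ContinuousOn ω (Icc 0 T))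
    (ht : t ≤ T) (hu : u ∈ Icc 0 t) : ω u ≤ Mstar ω t :=
  le_csSup (bddAbove_img hω ht) ⟨u, hu, rfl⟩

lemma Mstar_zero (ω : ℝ → ℝ) : Mstar ω 0 = ω 0 := by
  simp [Mstar, Icc_self]

lemma Mstar_le {ω : ℝ → ℝ} {t c : ℝ} (ht : 0 ≤ t) (h : ∀ u ∈ Icc 0 t, ω u ≤ c) :
    Mstar ω t ≤ c :=
  csSup_le ⟨ω 0, 0, ⟨le_rfl, ht⟩, rfl⟩ (by rintro x ⟨u, hu, rfl⟩; exact h u hu)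

lemma Mstar_eq_max {ω : ℝ → ℝ} {t : ℝ} (hω : ContinuousOn ω (Icc 0 T))
    (ht0 : 0 ≤ t) (ht : t ≤ T) :
    ∃ u ∈ Icc (0:ℝ) t, Mstar ω t = ω u := by
  obtain ⟨u, hu, hmax⟩ := isCompact_Icc.exists_isMaxOn (nonempty_Icc.2 ht0)
    (hω.mono (Icc_subset_Icc le_rfl ht))
  exact ⟨u, hu, le_antisymm (Mstar_le ht0 fun v hv => hmax hv) (le_Mstar hω ht hu)⟩

lemma Mstar_continuousOn {ω : ℝ → ℝ} (hω : ContinuousOn ω (Icc 0 T)) :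
    ContinuousOn (Mstar ω) (Icc 0 T) := by
  rw [Metric.continuousOn_iff]
  intro x hx ε hε
  obtain ⟨δ, hδ, hu⟩ := Metric.uniformContinuousOn_iff.1
    (isCompact_Icc.uniformContinuousOn_of_continuous hω) ε hε
  refine ⟨δ, hδ, fun y hy hxy => ?_⟩
  have key : ∀ a ∈ Icc (0:ℝ) T, ∀ b ∈ Icc (0:ℝ) T, a ≤ b → b - a < δ →
      Mstar ω b - Mstar ω a < ε := by
    intro a ha b hb hab hd
    obtain ⟨u, hu', hM⟩ := Mstar_eq_max hω (ha.1.trans hab) hb.2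
    rcases le_or_gt u a with h | h
    · have h2 : Mstar ω b ≤ Mstar ω a := hM ▸ le_Mstar hω ha.2 ⟨hu'.1, h⟩
      linarith
    · have hda : dist u a < δ := by
        rw [Real.dist_eq, abs_of_nonneg (by linarith [hu'.1])]
        linarith [hu'.2]
      have h1 := hu u ⟨hu'.1, hu'.2.trans hb.2⟩ a ha hda
      rw [Real.dist_eq] at h1
      have h2 : ω u - ω a < ε := (abs_lt.1 h1).2
      have h3 : ω a ≤ Mstar ω a := le_Mstar hω ha.2 (right_mem_Icc.2 ha.1)
      linarith [hM ▸ h2]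
  have hmono : ∀ a ∈ Icc (0:ℝ) T, ∀ b ∈ Icc (0:ℝ) T, a ≤ b →
      Mstar ω a ≤ Mstar ω b :=
    fun a ha b hb hab => csSup_le_csSup (bddAbove_img hω hb.2)
      ⟨ω 0, 0, ⟨le_rfl, ha.1⟩, rfl⟩ (Set.image_mono (Icc_subset_Icc le_rfl hab))
  rw [Real.dist_eq] at hxy ⊢
  rcases le_total y x with h | h
  · have h1 := key y hy x hx h (by cases abs_lt.1 hxy; linarith)
    have h2 := hmono y hy x hx h
    rw [abs_of_nonpos (by linarith)]; linarith
  · have h1 := key x hx y hy h (by cases abs_lt.1 hxy; linarith)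
    have h2 := hmono x hx y hy h
    rw [abs_of_nonneg (by linarith)]; linarith

lemma psi_zero_pos {T : ℝ} (hT : 0 < T) {ψ : ℝ → ℝ} (hψT : ψ T = 0)
    (hψa : StrictAntiOn ψ (Icc 0 T)) : 0 < ψ 0 := by
  have := hψa ⟨le_rfl, hT.le⟩ ⟨hT.le, le_rfl⟩ hT
  linarith

lemma sigmaStar_spec {T : ℝ} (hT : 0 < T) {ψ : ℝ → ℝ} (hψT : ψ T = 0)
    (hψc : ContinuousOn ψ (Icc 0 T)) (hψa : StrictAntiOn ψ (Icc 0 T))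
    {ω : ℝ → ℝ} (hω : ContinuousOn ω (Icc 0 T)) :
    sigmaStar T (fun t _ => ψ t) ω ∈
      {s ∈ Icc 0 T | ψ s ≤ Mstar ω s - ω s} ∧
    0 < sigmaStar T (fun t _ => ψ t) ω ∧
    Mstar ω (sigmaStar T (fun t _ => ψ t) ω) - ω (sigmaStar T (fun t _ => ψ t) ω)
      ≤ ψ (sigmaStar T (fun t _ => ψ t) ω) := by
  set S : Set ℝ := {s ∈ Icc 0 T | ψ s ≤ Mstar ω s - ω s} with hS
  have hσ : sigmaStar T (fun t _ => ψ t) ω = sInf S := rfl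
  have hψ0 : 0 < ψ 0 := psi_zero_pos hT hψT hψa
  have hf : ContinuousOn (fun s => Mstar ω s - ω s - ψ s) (Icc 0 T) :=
    ((Mstar_continuousOn hω).sub hω).sub hψc
  have hSeq : S = Icc 0 T ∩ (fun s => Mstar ω s - ω s - ψ s) ⁻¹' Ici 0 := by
    ext s
    simp only [hS, mem_sep_iff, mem_inter_iff, mem_preimage, mem_Ici]
    constructor
    · rintro ⟨h1, h2⟩; exact ⟨h1, by linarith⟩
    · rintro ⟨h1, h2⟩; exact ⟨h1, by linarith⟩
  have hclosed : IsClosed S := by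
    rw [hSeq]
    exact hf.preimage_isClosed_of_isClosed isClosed_Icc isClosed_Ici
  have hTmem : T ∈ S := by
    refine ⟨⟨hT.le, le_rfl⟩, ?_⟩
    have := le_Mstar hω le_rfl (right_mem_Icc.2 hT.le)
    rw [hψT]; linarith
  have hbdd : BddBelow S := ⟨0, fun s hs => hs.1.1⟩
  have hmem : sInf S ∈ S := hclosed.csInf_mem ⟨T, hTmem⟩ hbdd
  have hpos : 0 < sInf S := by
    rcases eq_or_lt_of_le hmem.1.1 with h | h
    · exfalso
      have h2 := hmem.2
      rw [← h, Mstar_zero] at h2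
      linarith
    · exact h
  refine ⟨hσ ▸ hmem, hσ ▸ hpos, ?_⟩
  rw [hσ]
  by_contra hcon
  push_neg at hcon
  have h0 : (fun s => Mstar ω s - ω s - ψ s) 0 < 0 := by
    simp only [Mstar_zero]; linarith
  have hσ0 : 0 < (fun s => Mstar ω s - ω s - ψ s) (sInf S) := by
    simp only; linarith
  have hsub : Icc (0:ℝ) (sInf S) ⊆ Icc 0 T := Icc_subset_Icc le_rfl hmem.1.2
  have hIVT := intermediate_value_Icc hpos.le (hf.mono hsub)
  obtain ⟨c, hc, hfc⟩ := hIVT ⟨h0.le, hσ0.le⟩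
  have hcS : c ∈ S := by
    refine ⟨⟨hc.1, hc.2.trans hmem.1.2⟩, ?_⟩
    simp only at hfc
    linarith
  have := csInf_le hbdd hcS
  have hcσ : c = sInf S := le_antisymm hc.2 this
  rw [hcσ] at hfc
  simp only at hfc
  linarith

lemma sigmaStar_isStoppingTime {T : ℝ} (hT : 0 < T) {ψ : ℝ → ℝ} (hψT : ψ T = 0)
    (hψc : ContinuousOn ψ (Icc 0 T)) (hψa : StrictAntiOn ψ (Icc 0 T)) :
    IsStoppingTime T (OmegaC T) (sigmaStar T (fun t _ => ψ t)) := by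
  constructor
  · intro ω hω
    exact (sigmaStar_spec hT hψT hψc hψa hω).1.1
  · intro ω hω t ht hσt ω' hω' hagree
    have hMeq : ∀ s ∈ Icc (0:ℝ) t, Mstar ω' s = Mstar ω s := by
      intro s hs
      unfold Mstar
      congr 1
      exact Set.image_congr fun u hu => hagree u ⟨hu.1, hu.2.trans hs.2⟩
    have hSiff : ∀ s ∈ Icc (0:ℝ) t,
        (s ∈ {s ∈ Icc 0 T | ψ s ≤ Mstar ω' s - ω' s} ↔
         s ∈ {s ∈ Icc 0 T | ψ s ≤ Mstar ω s - ω s}) := by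
      intro s hs
      rw [mem_sep_iff, mem_sep_iff, hMeq s hs, hagree s hs]
    have hmem := (sigmaStar_spec hT hψT hψc hψa hω).1
    have hσIcc : sigmaStar T (fun t _ => ψ t) ω ∈ Icc (0:ℝ) t := ⟨hmem.1.1, hσt⟩
    have hmem' : sigmaStar T (fun t _ => ψ t) ω ∈
        {s ∈ Icc 0 T | ψ s ≤ Mstar ω' s - ω' s} :=
      (hSiff _ hσIcc).2 hmem
    have hbdd' : BddBelow {s ∈ Icc 0 T | ψ s ≤ Mstar ω' s - ω' s} :=
      ⟨0, fun s hs => hs.1.1⟩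
    have hbdd : BddBelow {s ∈ Icc 0 T | ψ s ≤ Mstar ω s - ω s} :=
      ⟨0, fun s hs => hs.1.1⟩
    refine le_antisymm (csInf_le hbdd' hmem') (le_csInf ⟨_, hmem'⟩ ?_)
    intro b hb
    rcases le_or_gt b t with h | h
    · exact csInf_le hbdd ((hSiff b ⟨hb.1.1, h⟩).1 hb)
    · exact hσt.trans h.le

lemma regret_sigmaStar_lt {T : ℝ} (hT : 0 < T) {ψ : ℝ → ℝ} (hψT : ψ T = 0)
    (hψc : ContinuousOn ψ (Icc 0 T)) (hψa : StrictAntiOn ψ (Icc 0 T))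
    {ω : ℝ → ℝ} (hω : ContinuousOn ω (Icc 0 T)) :
    regret (fun t _ => ψ t) (sigmaStar T (fun t _ => ψ t)) ω < ψ 0 := by
  obtain ⟨hmem, hpos, hle⟩ := sigmaStar_spec hT hψT hψc hψa hω
  have hlt : ψ (sigmaStar T (fun t _ => ψ t) ω) < ψ 0 :=
    hψa ⟨le_rfl, hT.le⟩ hmem.1 hpos
  exact max_lt (lt_of_le_of_lt hle hlt) hlt

lemma regret_zero {T : ℝ} (hT : 0 < T) {ψ : ℝ → ℝ} (hψT : ψ T = 0)
    (hψa : StrictAntiOn ψ (Icc 0 T)) (ω : ℝ → ℝ) :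
    regret (fun t _ => ψ t) (fun _ => 0) ω = ψ 0 := by
  have h0 : 0 < ψ 0 := psi_zero_pos hT hψT hψa
  unfold regret
  rw [Mstar_zero]
  simp only [sub_self]
  exact max_eq_right h0.le

end Helpers

/-- Example 1: for `Ω = C([0,T],ℝ)` and `ψ` independent of `ω`,
the deterministic stopping time `τ₀ ≡ 0` is not Pareto optimal with respect to
`𝒜(0,ω)` for any `ω`: the stopping time `σ*` satisfies
`R(0,ω;σ*,ω') < ψ(0) = R(0,ω;τ₀,ω')` for all `ω' ∈ Ω`. -/
theorem stmt12 (T : ℝ) (hT : 0 < T)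
    (ψ : ℝ → ℝ) (hψT : ψ T = 0)
    (hψnn : ∀ t ∈ Set.Icc 0 T, 0 ≤ ψ t)
    (hψc : ContinuousOn ψ (Set.Icc 0 T))
    (hψa : StrictAntiOn ψ (Set.Icc 0 T))
    (ω : ℝ → ℝ) (hω : ω ∈ OmegaC T) :
    ¬ ParetoOptimalAt T (OmegaC T) (fun t _ => ψ t) 0 ω (fun _ => 0) ∧
    ∀ ω' ∈ OmegaC T,
      regret (fun t _ => ψ t) (sigmaStar T (fun t _ => ψ t)) ω' < ψ 0 ∧
      ψ 0 = regret (fun t _ => ψ t) (fun _ => 0) ω' := by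
  constructor
  · rintro ⟨_, _, hno⟩
    apply hno
    refine ⟨sigmaStar T (fun t _ => ψ t), sigmaStar_isStoppingTime hT hψT hψc hψa,
      ?_, ?_, ω, ⟨hω, fun s _ => rfl⟩, ?_⟩
    · intro ω' hω'
      exact (sigmaStar_spec hT hψT hψc hψa hω'.1).1.1.1
    · intro ω' hω'
      rw [regret_zero hT hψT hψa]
      exact (regret_sigmaStar_lt hT hψT hψc hψa hω'.1).le
    · rw [regret_zero hT hψT hψa]
      exact regret_sigmaStar_lt hT hψT hψc hψa hω
  · intro ω' hω'
    exact ⟨regret_sigmaStar_lt hT hψT hψc hψa hω',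
      (regret_zero hT hψT hψa ω').symm⟩


end SellingRegret

end
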